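/- Let n and m be coprime positive integers. Then an n × m doubly stochastic array A is extremal if and only if |supp A| = n + m − 1. -/
import Mathlib


/-- An `n × m` real matrix is a *doubly stochastic array* if its entries are
nonnegative, each column sums to `n` and each row sums to `m`. -/
def IsDSA (n m : ℕ) (A : Matrix (Fin n) (Fin m) ℝ) : Prop :=
  (∀ i j, 0 ≤ A i j) ∧ (∀ j, ∑ i, A i j = (n : ℝ)) ∧ (∀ i, ∑ j, A i j = (m : ℝ))

/-- An array `A ∈ S(n,m)` is *extremal* if it cannot be written as a convex
combination of two doubly stochastic arrays both different from `A`. -/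
def IsExtremal (n m : ℕ) (A : Matrix (Fin n) (Fin m) ℝ) : Prop :=
  IsDSA n m A ∧ ∀ (B C : Matrix (Fin n) (Fin m) ℝ) (t : ℝ),
    IsDSA n m B → IsDSA n m C → 0 < t → t < 1 →
    A = t • B + (1 - t) • C → B = A ∨ C = A

/-- The support of a matrix: the set of positions of its nonzero entries. -/
def matSupp (n m : ℕ) (A : Matrix (Fin n) (Fin m) ℝ) : Set (Fin n × Fin m) :=
  {p | A p.1 p.2 ≠ 0}

/-- The size of the support of a matrix. -/
noncomputable def suppCard (n m : ℕ) (A : Matrix (Fin n) (Fin m) ℝ) : ℕ :=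
  (matSupp n m A).ncard

/-- A subset `Ω` of positions contains a *cycle* if there are `s ≥ 2`, distinct row
indices `i₁,…,i_s` and distinct column indices `j₁,…,j_s` such that all the pairs
`(i₁,j₁), (i₂,j₁), (i₂,j₂), (i₃,j₂), …, (i_s,j_s), (i₁,j_s)` belong to `Ω`. -/
def ContainsCycle (n m : ℕ) (Ω : Set (Fin n × Fin m)) : Prop :=
  ∃ s : ℕ, 2 ≤ s ∧ ∃ (i : ZMod s → Fin n) (j : ZMod s → Fin m),
    Function.Injective i ∧ Function.Injective j ∧
    ∀ t : ZMod s, (i t, j t) ∈ Ω ∧ (i (t + 1), j t) ∈ Ω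

/-- Two matrices are *equivalent* if one is obtained from the other by a
permutation of rows and a permutation of columns. -/
def MatEquiv (n m : ℕ) (A B : Matrix (Fin n) (Fin m) ℝ) : Prop :=
  ∃ (σ : Equiv.Perm (Fin n)) (τ : Equiv.Perm (Fin m)), ∀ i j, B i j = A (σ i) (τ j)

/- ----------------------------------------------------------------
   Auxiliary development for the proof
   ---------------------------------------------------------------- -/

open Finset Matrix Module

set_option linter.unnecessarySimpa false
set_option linter.unusedSectionVars false

/-- Balance lemma: if the support of a doubly stochastic array is compatible with
a split `R, C` of rows and columns, then (by coprimality) `R` and `C` are everything. -/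
lemma split_lemma (n m : ℕ) (hn : 0 < n) (hco : Nat.Coprime n m)
    (A : Matrix (Fin n) (Fin m) ℝ) (hA : IsDSA n m A)
    (R : Finset (Fin n)) (C : Finset (Fin m))
    (hRC : ∀ i j, A i j ≠ 0 → (i ∈ R ↔ j ∈ C)) (hR : R.Nonempty) :
    R = Finset.univ ∧ C = Finset.univ := by
  obtain ⟨hpos, hcol, hrow⟩ := hA
  have h1 : ∑ i ∈ R, ∑ j, A i j = (m : ℝ) * R.card := by
    rw [Finset.sum_congr rfl fun i _ => hrow i]
    rw [Finset.sum_const, nsmul_eq_mul, mul_comm]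
  have h2 : ∀ i ∈ R, ∑ j, A i j = ∑ j ∈ C, A i j := by
    intro i hi
    refine (Finset.sum_subset (Finset.subset_univ C) ?_).symm
    intro j _ hj
    by_contra h'
    exact hj ((hRC i j h').mp hi)
  have h3 : ∑ j ∈ C, ∑ i, A i j = (n : ℝ) * C.card := by
    rw [Finset.sum_congr rfl fun j _ => hcol j]
    rw [Finset.sum_const, nsmul_eq_mul, mul_comm]
  have h4 : ∀ j ∈ C, ∑ i, A i j = ∑ i ∈ R, A i j := by
    intro j hj
    refine (Finset.sum_subset (Finset.subset_univ R) ?_).symm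
    intro i _ hi
    by_contra h'
    exact hi ((hRC i j h').mpr hj)
  have key : (m : ℝ) * R.card = (n : ℝ) * C.card := by
    rw [← h1, ← h3, Finset.sum_congr rfl h2, Finset.sum_congr rfl h4,
      Finset.sum_comm]
  have keyN : m * R.card = n * C.card := by exact_mod_cast key
  have hdvd : n ∣ R.card := (Nat.Coprime.dvd_of_dvd_mul_left hco ⟨C.card, keyN⟩)
  have hle : R.card ≤ n := by simpa using Finset.card_le_univ R
  have hge : n ≤ R.card := Nat.le_of_dvd (Finset.card_pos.mpr hR) hdvd
  have hcardR : R.card = n := le_antisymm hle hge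
  have hRu : R = Finset.univ := Finset.eq_univ_of_card R (by simpa using hcardR)
  refine ⟨hRu, ?_⟩
  have hcardC : C.card = m := by
    have h5 : n * C.card = n * m := by rw [← keyN, hcardR, mul_comm]
    exact (Nat.eq_of_mul_eq_mul_left hn h5)
  exact Finset.eq_univ_of_card C (by simpa using hcardC)

section Aux

variable (n m : ℕ) (Ω : Set (Fin n × Fin m)) [DecidablePred (· ∈ Ω)]

/-- The (bipartite) incidence matrix of a set of positions `Ω`. -/
def auxM : Matrix (Fin n ⊕ Fin m) ↥Ω ℝ :=
  fun v p => Sum.elim (fun i => if (p : Fin n × Fin m).1 = i then (1:ℝ) else 0)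
    (fun j => if (p : Fin n × Fin m).2 = j then (1:ℝ) else 0) v

/-- The extension of a function on `Ω` to a matrix vanishing off `Ω`. -/
def auxExt (f : ↥Ω → ℝ) : Matrix (Fin n) (Fin m) ℝ :=
  fun i j => if h : (i, j) ∈ Ω then f ⟨(i, j), h⟩ else 0

lemma sum_coe (g : Fin n × Fin m → ℝ) (h0 : ∀ q, q ∉ Ω → g q = 0) :
    ∑ p : ↥Ω, g ↑p = ∑ q, g q := by
  rw [← Finset.sum_subtype (Finset.univ.filter (· ∈ Ω)) (by simp) g]
  exact Finset.sum_filter_of_ne (fun q _ hq => by by_contra h; exact hq (h0 q h))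

lemma auxExt_coe (f : ↥Ω → ℝ) (p : ↥Ω) :
    auxExt n m Ω f (p : Fin n × Fin m).1 (p : Fin n × Fin m).2 = f p := by
  have hp : ((p : Fin n × Fin m).1, (p : Fin n × Fin m).2) ∈ Ω := by
    simpa using p.2
  rw [auxExt, dif_pos hp]

lemma auxM_mulVec (f : ↥Ω → ℝ) :
    (auxM n m Ω).mulVec f =
      Sum.elim (fun i => ∑ j, auxExt n m Ω f i j) (fun j => ∑ i, auxExt n m Ω f i j) := by
  funext v
  cases v with
  | inl i =>
    have h1 : (auxM n m Ω).mulVec f (Sum.inl i)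
        = ∑ p : ↥Ω, (fun q : Fin n × Fin m =>
            (if q.1 = i then (1:ℝ) else 0) * auxExt n m Ω f q.1 q.2) ↑p := by
      simp only [Matrix.mulVec, dotProduct, auxM, Sum.elim_inl]
      exact Finset.sum_congr rfl fun p _ => by rw [auxExt_coe]
    rw [h1, sum_coe n m Ω (fun q : Fin n × Fin m =>
            (if q.1 = i then (1:ℝ) else 0) * auxExt n m Ω f q.1 q.2)
            (fun q hq => by simp [auxExt, dif_neg hq])]
    simp only [Fintype.sum_prod_type, Sum.elim_inl]
    rw [Finset.sum_comm]
    simp [Finset.sum_ite_eq']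
  | inr j =>
    have h1 : (auxM n m Ω).mulVec f (Sum.inr j)
        = ∑ p : ↥Ω, (fun q : Fin n × Fin m =>
            (if q.2 = j then (1:ℝ) else 0) * auxExt n m Ω f q.1 q.2) ↑p := by
      simp only [Matrix.mulVec, dotProduct, auxM, Sum.elim_inr]
      exact Finset.sum_congr rfl fun p _ => by rw [auxExt_coe]
    rw [h1, sum_coe n m Ω (fun q : Fin n × Fin m =>
            (if q.2 = j then (1:ℝ) else 0) * auxExt n m Ω f q.1 q.2)
            (fun q hq => by simp [auxExt, dif_neg hq])]
    simp only [Fintype.sum_prod_type, Sum.elim_inr]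
    simp [Finset.sum_ite_eq']

lemma auxMT_mulVec (x : Fin n ⊕ Fin m → ℝ) :
    (auxM n m Ω)ᵀ.mulVec x
      = fun p : ↥Ω => x (Sum.inl (p : Fin n × Fin m).1) + x (Sum.inr (p : Fin n × Fin m).2) := by
  funext p
  simp only [Matrix.mulVec, dotProduct, Matrix.transpose_apply, auxM]
  rw [Fintype.sum_sum_type]
  simp [Finset.sum_ite_eq']

end Aux

section Ker

variable (n m : ℕ) (A : Matrix (Fin n) (Fin m) ℝ)
  [DecidablePred (· ∈ matSupp n m A)]

lemma mem_ker_iff (x : Fin n ⊕ Fin m → ℝ) :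
    x ∈ LinearMap.ker (auxM n m (matSupp n m A))ᵀ.mulVecLin ↔
      ∀ p : ↥(matSupp n m A),
        x (Sum.inl (p : Fin n × Fin m).1) + x (Sum.inr (p : Fin n × Fin m).2) = 0 := by
  rw [LinearMap.mem_ker, Matrix.mulVecLin_apply, auxMT_mulVec]
  constructor
  · intro h p; exact congrFun h p
  · intro h; funext p; exact h p

lemma ker_transpose (hn : 0 < n) (hco : Nat.Coprime n m) (hA : IsDSA n m A) :
    LinearMap.ker (auxM n m (matSupp n m A))ᵀ.mulVecLin
      = Submodule.span ℝ {Sum.elim (fun _ : Fin n => (1:ℝ)) (fun _ : Fin m => (-1:ℝ))} := by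
  apply le_antisymm
  · intro x hx
    rw [mem_ker_iff] at hx
    set c := x (Sum.inl ⟨0, hn⟩) with hc
    set R : Finset (Fin n) := Finset.univ.filter (fun i => x (Sum.inl i) = c) with hRdef
    set C : Finset (Fin m) := Finset.univ.filter (fun j => x (Sum.inr j) = -c) with hCdef
    have hRC : ∀ i j, A i j ≠ 0 → (i ∈ R ↔ j ∈ C) := by
      intro i j hij
      have h0 : x (Sum.inl i) + x (Sum.inr j) = 0 := hx ⟨(i, j), hij⟩
      simp only [hRdef, hCdef, Finset.mem_filter, Finset.mem_univ, true_and]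
      constructor
      · intro h; linarith
      · intro h; linarith
    have hR : R.Nonempty := ⟨⟨0, hn⟩, by simp [hRdef, hc]⟩
    obtain ⟨hRu, hCu⟩ := split_lemma n m hn hco A hA R C hRC hR
    have hxR : ∀ i, x (Sum.inl i) = c := by
      intro i
      have : i ∈ R := hRu ▸ Finset.mem_univ i
      simpa [hRdef] using this
    have hxC : ∀ j, x (Sum.inr j) = -c := by
      intro j
      have : j ∈ C := hCu ▸ Finset.mem_univ j
      simpa [hCdef] using this
    rw [Submodule.mem_span_singleton]
    refine ⟨c, ?_⟩
    funext v
    cases v with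
    | inl i => simp [hxR i]
    | inr j => simp [hxC j]
  · rw [Submodule.span_le, Set.singleton_subset_iff]
    rw [SetLike.mem_coe, mem_ker_iff]
    intro p
    simp

lemma card_count (hker : finrank ℝ
      (LinearMap.ker (auxM n m (matSupp n m A))ᵀ.mulVecLin) = 1) :
    suppCard n m A = (n + m - 1)
      + finrank ℝ (LinearMap.ker (auxM n m (matSupp n m A)).mulVecLin) := by
  set M := auxM n m (matSupp n m A) with hM
  have hrn1 : finrank ℝ (LinearMap.range Mᵀ.mulVecLin)
      + finrank ℝ (LinearMap.ker Mᵀ.mulVecLin) = n + m := by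
    rw [LinearMap.finrank_range_add_finrank_ker]
    simp [finrank_pi]
  have htr : Mᵀ.rank = M.rank := Matrix.rank_transpose M
  have hrn2 : finrank ℝ (LinearMap.range M.mulVecLin)
      + finrank ℝ (LinearMap.ker M.mulVecLin) = suppCard n m A := by
    rw [LinearMap.finrank_range_add_finrank_ker]
    rw [finrank_pi]
    rw [suppCard, ← Nat.card_coe_set_eq, Nat.card_eq_fintype_card]
  have h1 : Mᵀ.rank = finrank ℝ (LinearMap.range Mᵀ.mulVecLin) := rfl
  have h2 : M.rank = finrank ℝ (LinearMap.range M.mulVecLin) := rfl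
  omega

/-- If the incidence kernel is trivial then `A` is extremal. -/
lemma extremal_of_ker_bot (hA : IsDSA n m A)
    (hker : LinearMap.ker (auxM n m (matSupp n m A)).mulVecLin = ⊥) :
    IsExtremal n m A := by
  refine ⟨hA, ?_⟩
  intro B C t hB hC ht ht1 heq
  -- B agrees with A off the support
  have hoff : ∀ i j, (i, j) ∉ matSupp n m A → B i j = 0 ∧ A i j = 0 := by
    intro i j hij
    have hA0 : A i j = 0 := by
      by_contra h
      exact hij h
    have he : A i j = t * B i j + (1 - t) * C i j := by
      have := congrFun (congrFun heq i) j
      simpa [Matrix.add_apply, Matrix.smul_apply, smul_eq_mul] using this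
    have h1 : 0 ≤ t * B i j := mul_nonneg ht.le (hB.1 i j)
    have h2 : 0 ≤ (1 - t) * C i j := mul_nonneg (by linarith) (hC.1 i j)
    have h3 : t * B i j = 0 := by linarith [he, hA0]
    have h4 : B i j = 0 := by
      rcases mul_eq_zero.mp h3 with h | h
      · exact absurd h ht.ne'
      · exact h
    exact ⟨h4, hA0⟩
  set f : ↥(matSupp n m A) → ℝ :=
    fun p => B (p : Fin n × Fin m).1 (p : Fin n × Fin m).2
      - A (p : Fin n × Fin m).1 (p : Fin n × Fin m).2 with hf
  have hExt : auxExt n m (matSupp n m A) f = fun i j => B i j - A i j := by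
    funext i j
    by_cases h : (i, j) ∈ matSupp n m A
    · rw [auxExt, dif_pos h]
    · rw [auxExt, dif_neg h]
      obtain ⟨hb, ha⟩ := hoff i j h
      rw [hb, ha, sub_zero]
  have hfker : f ∈ LinearMap.ker (auxM n m (matSupp n m A)).mulVecLin := by
    rw [LinearMap.mem_ker, Matrix.mulVecLin_apply, auxM_mulVec, hExt]
    funext v
    cases v with
    | inl i =>
      simp only [Sum.elim_inl, Pi.zero_apply]
      rw [Finset.sum_sub_distrib, hB.2.2 i, hA.2.2 i, sub_self]
    | inr j =>
      simp only [Sum.elim_inr, Pi.zero_apply]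
      rw [Finset.sum_sub_distrib, hB.2.1 j, hA.2.1 j, sub_self]
  rw [hker, Submodule.mem_bot] at hfker
  left
  funext i j
  by_cases h : (i, j) ∈ matSupp n m A
  · have : f ⟨(i, j), h⟩ = 0 := congrFun hfker ⟨(i, j), h⟩
    have : B i j - A i j = 0 := this
    linarith
  · obtain ⟨hb, ha⟩ := hoff i j h
    rw [hb, ha]

/-- If `A` is extremal then the incidence kernel is trivial. -/
lemma ker_bot_of_extremal (hA : IsDSA n m A) (hext : IsExtremal n m A) :
    LinearMap.ker (auxM n m (matSupp n m A)).mulVecLin = ⊥ := by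
  rw [eq_bot_iff]
  intro f hf
  rw [Submodule.mem_bot]
  by_contra hf0
  obtain ⟨p, hp⟩ : ∃ p, f p ≠ 0 := by
    by_contra h
    push_neg at h
    exact hf0 (funext h)
  set D := auxExt n m (matSupp n m A) f with hD
  have hsum : Sum.elim (fun i => ∑ j, D i j) (fun j => ∑ i, D i j)
      = (0 : Fin n ⊕ Fin m → ℝ) := by
    have h := LinearMap.mem_ker.mp hf
    rw [Matrix.mulVecLin_apply, auxM_mulVec] at h
    exact h
  have hDrow : ∀ i, ∑ j, D i j = 0 := by
    intro i
    simpa using congrFun hsum (Sum.inl i)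
  have hDcol : ∀ j, ∑ i, D i j = 0 := by
    intro j
    simpa using congrFun hsum (Sum.inr j)
  have hDp : D (p : Fin n × Fin m).1 (p : Fin n × Fin m).2 ≠ 0 := by
    rw [hD, auxExt_coe]
    exact hp
  haveI : Nonempty ↥(matSupp n m A) := ⟨p⟩
  set ε : ℝ := Finset.univ.inf' Finset.univ_nonempty
    (fun q : ↥(matSupp n m A) =>
      A (q : Fin n × Fin m).1 (q : Fin n × Fin m).2
        / (|D (q : Fin n × Fin m).1 (q : Fin n × Fin m).2| + 1)) with hε
  have hεpos : 0 < ε := by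
    rw [hε, Finset.lt_inf'_iff]
    intro q _
    apply div_pos
    · have h1 : A (q : Fin n × Fin m).1 (q : Fin n × Fin m).2 ≠ 0 := q.2
      exact lt_of_le_of_ne (hA.1 _ _) (Ne.symm h1)
    · positivity
  have hbound : ∀ i j, ε * |D i j| ≤ A i j := by
    intro i j
    by_cases h : (i, j) ∈ matSupp n m A
    · have hin := Finset.inf'_le
        (fun q : ↥(matSupp n m A) =>
          A (q : Fin n × Fin m).1 (q : Fin n × Fin m).2
            / (|D (q : Fin n × Fin m).1 (q : Fin n × Fin m).2| + 1))
        (Finset.mem_univ (⟨(i, j), h⟩ : ↥(matSupp n m A)))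
      have hin' : ε ≤ A i j / (|D i j| + 1) := hin
      have habs : (0:ℝ) < |D i j| + 1 := by positivity
      have h2 : ε * (|D i j| + 1) ≤ A i j := (le_div_iff₀ habs).mp hin'
      nlinarith [abs_nonneg (D i j), hεpos.le]
    · have : D i j = 0 := by rw [hD, auxExt, dif_neg h]
      rw [this]
      simp
      exact hA.1 i j
  set B := A + ε • D with hB
  set C := A - ε • D with hC
  have hBapp : ∀ i j, B i j = A i j + ε * D i j := by
    intro i j; rw [hB]; simp [Matrix.add_apply, Matrix.smul_apply, smul_eq_mul]
  have hCapp : ∀ i j, C i j = A i j - ε * D i j := by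
    intro i j; rw [hC]; simp [Matrix.sub_apply, Matrix.smul_apply, smul_eq_mul]
  have hBdsa : IsDSA n m B := by
    refine ⟨?_, ?_, ?_⟩
    · intro i j
      rw [hBapp]
      have h1 := hbound i j
      have h2 : -|D i j| ≤ D i j := neg_abs_le _
      nlinarith [hεpos.le]
    · intro j
      rw [Finset.sum_congr rfl fun i _ => hBapp i j]
      rw [Finset.sum_add_distrib, hA.2.1 j, ← Finset.mul_sum, hDcol j, mul_zero, add_zero]
    · intro i
      rw [Finset.sum_congr rfl fun j _ => hBapp i j]
      rw [Finset.sum_add_distrib, hA.2.2 i, ← Finset.mul_sum, hDrow i, mul_zero, add_zero]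
  have hCdsa : IsDSA n m C := by
    refine ⟨?_, ?_, ?_⟩
    · intro i j
      rw [hCapp]
      have h1 := hbound i j
      have h2 : D i j ≤ |D i j| := le_abs_self _
      nlinarith [hεpos.le]
    · intro j
      rw [Finset.sum_congr rfl fun i _ => hCapp i j]
      rw [Finset.sum_sub_distrib, hA.2.1 j, ← Finset.mul_sum, hDcol j, mul_zero, sub_zero]
    · intro i
      rw [Finset.sum_congr rfl fun j _ => hCapp i j]
      rw [Finset.sum_sub_distrib, hA.2.2 i, ← Finset.mul_sum, hDrow i, mul_zero, sub_zero]
  have heq : A = (1/2 : ℝ) • B + (1 - (1/2 : ℝ)) • C := by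
    funext i j
    have := hBapp i j
    have := hCapp i j
    simp only [Matrix.add_apply, Matrix.smul_apply, smul_eq_mul]
    rw [hBapp, hCapp]
    ring
  rcases hext.2 B C (1/2) hBdsa hCdsa (by norm_num) (by norm_num) heq with h | h
  · have h0 := congrFun (congrFun h (p : Fin n × Fin m).1) (p : Fin n × Fin m).2
    rw [hBapp] at h0
    have : ε * D (p : Fin n × Fin m).1 (p : Fin n × Fin m).2 = 0 := by linarith
    rcases mul_eq_zero.mp this with h' | h'
    · exact hεpos.ne' h'
    · exact hDp h'
  · have h0 := congrFun (congrFun h (p : Fin n × Fin m).1) (p : Fin n × Fin m).2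
    rw [hCapp] at h0
    have : ε * D (p : Fin n × Fin m).1 (p : Fin n × Fin m).2 = 0 := by linarith
    rcases mul_eq_zero.mp this with h' | h'
    · exact hεpos.ne' h'
    · exact hDp h'

end Ker

/-- For coprime `n, m`, a doubly stochastic array is extremal if and
only if its support has size `n + m − 1`. -/
theorem extremal_iff_support_card_coprime (n m : ℕ) (hn : 0 < n) (hm : 0 < m)
    (hco : Nat.Coprime n m) (A : Matrix (Fin n) (Fin m) ℝ) (hA : IsDSA n m A) :
    IsExtremal n m A ↔ suppCard n m A = n + m - 1 := by
  haveI : DecidablePred (· ∈ matSupp n m A) := Classical.decPred _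
  have hv0 : (Sum.elim (fun _ : Fin n => (1:ℝ)) (fun _ : Fin m => (-1:ℝ))) ≠ 0 := by
    intro h
    have := congrFun h (Sum.inl ⟨0, hn⟩)
    simp at this
  have hker1 : finrank ℝ
      (LinearMap.ker (auxM n m (matSupp n m A))ᵀ.mulVecLin) = 1 := by
    rw [ker_transpose n m A hn hco hA]
    exact finrank_span_singleton hv0
  have hcard := card_count n m A hker1
  constructor
  · intro hext
    have hbot := ker_bot_of_extremal n m A hA hext
    rw [hbot] at hcard
    simpa [finrank_bot] using hcard
  · intro hc
    apply extremal_of_ker_bot n m A hA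
    have h0 : finrank ℝ (LinearMap.ker (auxM n m (matSupp n m A)).mulVecLin) = 0 := by
      omega
    exact Submodule.finrank_eq_zero.mp h0
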